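/- Fix a real k > −1 and let F_k(r) := r·J_k(r)/J_{k+1}(r). If 0 < a < b and J_{k+1}(r) ≠ 0 for every r in the closed interval [a, b], then F_k(b) < F_k(a); that is, F_k is strictly decreasing on every interval on which J_{k+1} does not vanish. -/

import Mathlib

open Real

/-- Bessel function of the first kind of real order `k`, defined by its power series
(valid for `r > 0`, using real powers). -/
noncomputable def besselJ (k r : ℝ) : ℝ :=
  ∑' m : ℕ, ((-1 : ℝ) ^ m / (m.factorial * Real.Gamma (m + k + 1))) * (r / 2) ^ ((2 * m : ℝ) + k)


noncomputable def bc (k : ℝ) (m : ℕ) : ℝ :=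
  (-1 : ℝ) ^ m / (m.factorial * Real.Gamma (m + k + 1))

noncomputable def bG (k x : ℝ) : ℝ := ∑' m : ℕ, bc k m * x ^ m

lemma gamma_arg_pos {k : ℝ} (hk : -1 < k) (m : ℕ) : 0 < (m : ℝ) + k + 1 := by
  have : (0:ℝ) ≤ m := Nat.cast_nonneg m
  linarith

lemma gamma_pos {k : ℝ} (hk : -1 < k) (m : ℕ) : 0 < Real.Gamma ((m : ℝ) + k + 1) :=
  Real.Gamma_pos_of_pos (gamma_arg_pos hk m)

lemma bc_succ {k : ℝ} (hk : -1 < k) (m : ℕ) :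
    bc k (m + 1) = -bc k m / ((m + 1) * ((m : ℝ) + k + 1)) := by
  have h1 : ((m:ℝ) + k + 1) ≠ 0 := (gamma_arg_pos hk m).ne'
  have hG : Real.Gamma (((m:ℕ)+1 : ℕ) + k + 1) = ((m:ℝ) + k + 1) * Real.Gamma ((m:ℝ) + k + 1) := by
    push_cast
    rw [show (m:ℝ) + 1 + k + 1 = ((m:ℝ) + k + 1) + 1 by ring, Real.Gamma_add_one h1]
  have hGpos := gamma_pos hk m
  have hfac : ((m+1).factorial : ℝ) = (m+1) * (m.factorial : ℝ) := by
    rw [Nat.factorial_succ]; push_cast; ring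
  have hfacpos : (0:ℝ) < m.factorial := by positivity
  simp only [bc, hG, hfac, pow_succ]
  field_simp

lemma bc_abs_succ {k : ℝ} (hk : -1 < k) (m : ℕ) :
    |bc k (m + 1)| = |bc k m| / ((m + 1) * ((m : ℝ) + k + 1)) := by
  rw [bc_succ hk m, abs_div, abs_neg]
  congr 1
  rw [abs_of_pos (by have := gamma_arg_pos hk m; positivity)]

lemma summable_aux {k : ℝ} (hk : -1 < k) {R : ℝ} (hR : 0 ≤ R) :
    Summable (fun m : ℕ => |bc k m| * (m + 1) * R ^ m) := by
  apply summable_of_ratio_norm_eventually_le (r := 1/2) (by norm_num)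
  filter_upwards [Filter.eventually_ge_atTop (max 2 (Nat.ceil (2 * R)))] with m hm
  have hm2 : (2:ℝ) ≤ m := by exact_mod_cast le_trans (le_max_left _ _) hm
  have hmR : 2 * R ≤ m := le_trans (Nat.le_ceil _) (by exact_mod_cast le_trans (le_max_right _ _) hm)
  have hden : (0:ℝ) < ((m:ℝ) + 1) * ((m:ℝ) + k + 1) := by
    have := gamma_arg_pos hk m; positivity
  have habs : |bc k m| * (m + 1) * R ^ m ≥ 0 := by positivity
  rw [Real.norm_eq_abs, Real.norm_eq_abs, abs_of_nonneg (by positivity), abs_of_nonneg habs]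
  have key : |bc k (m+1)| * ((m:ℝ) + 1 + 1) * R ^ (m+1)
      = |bc k m| * (((m:ℝ) + 2) * R / (((m:ℝ)+1) * ((m:ℝ)+k+1))) * R ^ m := by
    rw [bc_abs_succ hk m, pow_succ]
    field_simp
    ring
  have hcast : ((m+1 : ℕ) : ℝ) + 1 = (m:ℝ) + 1 + 1 := by push_cast; ring
  rw [hcast, key]
  have hfrac : ((m:ℝ) + 2) * R / (((m:ℝ)+1) * ((m:ℝ)+k+1)) ≤ (1/2) * ((m:ℝ) + 1) := by
    rw [div_le_iff₀ hden]
    have hkm : (m:ℝ) ≤ (m:ℝ) + k + 1 := by linarith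
    nlinarith [sq_nonneg ((m:ℝ) - 1), hR]
  have hb : (0:ℝ) ≤ |bc k m| * R ^ m := by positivity
  calc |bc k m| * (((m:ℝ) + 2) * R / (((m:ℝ)+1) * ((m:ℝ)+k+1))) * R ^ m
      ≤ |bc k m| * ((1/2) * ((m:ℝ)+1)) * R ^ m := by
        apply mul_le_mul_of_nonneg_right _ (by positivity)
        exact mul_le_mul_of_nonneg_left hfrac (abs_nonneg _)
    _ = 1/2 * (|bc k m| * ((m:ℝ)+1) * R ^ m) := by ring

lemma summable_bG {k : ℝ} (hk : -1 < k) (x : ℝ) :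
    Summable (fun m : ℕ => bc k m * x ^ m) := by
  apply Summable.of_norm_bounded (summable_aux hk (abs_nonneg x))
  intro m
  rw [Real.norm_eq_abs, abs_mul, abs_pow]
  have h1 : |bc k m| * |x| ^ m ≤ |bc k m| * ((m:ℝ)+1) * |x| ^ m := by
    nlinarith [abs_nonneg (bc k m), pow_nonneg (abs_nonneg x) m, Nat.cast_nonneg (α := ℝ) m,
      mul_nonneg (abs_nonneg (bc k m)) (pow_nonneg (abs_nonneg x) m)]
  linarith

lemma bc_succ_mul {k : ℝ} (hk : -1 < k) (m : ℕ) :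
    bc k (m + 1) * ((m : ℝ) + 1) = -bc (k + 1) m := by
  rw [bc_succ hk m]
  have h1 : ((m:ℝ) + k + 1) ≠ 0 := (gamma_arg_pos hk m).ne'
  have h2 : ((m:ℝ) + 1) ≠ 0 := by positivity
  have : bc (k+1) m = bc k m / ((m:ℝ) + k + 1) := by
    simp only [bc]
    rw [show (m:ℝ) + (k + 1) + 1 = ((m:ℝ) + k + 1) + 1 by ring, Real.Gamma_add_one h1]
    field_simp
  rw [this]
  field_simp

lemma deriv_term_bound {k : ℝ} {R : ℝ} (hR : 1 ≤ R) (m : ℕ) {y : ℝ} (hy : |y| ≤ R) :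
    ‖bc k m * ((m:ℝ) * y ^ (m - 1))‖ ≤ |bc k m| * ((m:ℝ) + 1) * R ^ m := by
  rw [Real.norm_eq_abs, abs_mul, abs_mul]
  have h0 : (0:ℝ) ≤ R := le_trans zero_le_one hR
  have h1 : |y| ^ (m-1) ≤ R ^ m := by
    calc |y| ^ (m-1) ≤ R ^ (m-1) := pow_le_pow_left₀ (abs_nonneg y) hy _
      _ ≤ R ^ m := pow_le_pow_right₀ hR (Nat.sub_le m 1)
  have h2 : |(m:ℝ)| = (m:ℝ) := abs_of_nonneg (Nat.cast_nonneg m)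
  rw [abs_pow, h2]
  have h3 : (m:ℝ) ≤ (m:ℝ) + 1 := by linarith
  have h4 : (m:ℝ) * |y| ^ (m-1) ≤ ((m:ℝ)+1) * R ^ m := by
    calc (m:ℝ) * |y| ^ (m-1) ≤ ((m:ℝ)+1) * |y| ^ (m-1) :=
          mul_le_mul_of_nonneg_right h3 (pow_nonneg (abs_nonneg y) _)
      _ ≤ ((m:ℝ)+1) * R ^ m := mul_le_mul_of_nonneg_left h1 (by positivity)
  calc |bc k m| * ((m:ℝ) * |y| ^ (m-1)) ≤ |bc k m| * (((m:ℝ)+1) * R ^ m) :=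
        mul_le_mul_of_nonneg_left h4 (abs_nonneg _)
    _ = |bc k m| * ((m:ℝ)+1) * R ^ m := by ring

lemma hasDerivAt_bG {k : ℝ} (hk : -1 < k) (x : ℝ) :
    HasDerivAt (bG k) (-bG (k + 1) x) x := by
  have hk1 : -1 < k + 1 := by linarith
  set R : ℝ := |x| + 1 with hRdef
  have hR1 : 1 ≤ R := by simp only [hRdef]; linarith [abs_nonneg x]
  have hR0 : (0:ℝ) ≤ R := le_trans zero_le_one hR1
  have hxt : x ∈ Set.Ioo (-R) R := by
    have h1 := neg_abs_le x
    have h2 := le_abs_self x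
    exact ⟨by simp only [hRdef]; linarith, by simp only [hRdef]; linarith⟩
  have key : HasDerivAt (fun z => ∑' m : ℕ, bc k m * z ^ m)
      (∑' m : ℕ, bc k m * ((m:ℝ) * x ^ (m - 1))) x := by
    apply hasDerivAt_tsum_of_isPreconnected (u := fun m : ℕ => |bc k m| * ((m:ℝ)+1) * R ^ m)
      (summable_aux hk hR0) isOpen_Ioo (convex_Ioo _ _).isPreconnected
      (fun m y _ => (hasDerivAt_pow m y).const_mul (bc k m))
      (fun m y hy => deriv_term_bound hR1 m (abs_le.mpr ⟨by linarith [hy.1], by linarith [hy.2]⟩))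
      (show (0:ℝ) ∈ Set.Ioo (-R) R from ⟨by linarith, by linarith⟩)
      (summable_bG hk 0) hxt
  have hsum : (∑' m : ℕ, bc k m * ((m:ℝ) * x ^ (m - 1))) = -bG (k+1) x := by
    have hs : Summable (fun m : ℕ => bc k m * ((m:ℝ) * x ^ (m - 1))) := by
      apply Summable.of_norm_bounded (summable_aux hk hR0)
      intro m
      exact deriv_term_bound hR1 m (by simp only [hRdef]; linarith [abs_nonneg x])
    rw [hs.tsum_eq_zero_add]
    simp only [Nat.cast_zero, zero_mul, mul_zero, zero_add]
    have : ∀ m : ℕ, bc k (m+1) * (((m:ℕ)+1 : ℝ) * x ^ ((m + 1) - 1)) = -(bc (k+1) m * x ^ m) := by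
      intro m
      have := bc_succ_mul hk m
      push_cast
      linear_combination x ^ m * this
    calc (∑' m : ℕ, bc k (m+1) * ((((m:ℕ)+1 : ℕ):ℝ) * x ^ ((m + 1) - 1)))
        = ∑' m : ℕ, -(bc (k+1) m * x ^ m) := by
          apply tsum_congr; intro m; push_cast; exact this m
      _ = -bG (k+1) x := by rw [tsum_neg]; rfl
  rw [← hsum]
  exact key

lemma bG_zero (k : ℝ) : bG k 0 = 1 / Real.Gamma (k + 1) := by
  rw [bG, tsum_eq_single 0 (fun m hm => by simp [zero_pow hm])]
  simp [bc]

lemma bc_rec {k : ℝ} (hk : -1 < k) (m : ℕ) :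
    bc k (m + 1) - (k + 1) * bc (k + 1) (m + 1) = -bc (k + 2) m := by
  have hA : (0:ℝ) < (m:ℝ) + k + 1 := gamma_arg_pos hk m
  have hB : (0:ℝ) < (m:ℝ) + k + 2 := by linarith
  have hGpos := gamma_pos hk m
  have hG1 : Real.Gamma ((m:ℝ) + 1 + k + 1) = ((m:ℝ)+k+1) * Real.Gamma ((m:ℝ)+k+1) := by
    rw [show (m:ℝ)+1+k+1 = ((m:ℝ)+k+1)+1 by ring, Real.Gamma_add_one hA.ne']
  have hG2 : Real.Gamma ((m:ℝ) + 1 + (k+1) + 1) = ((m:ℝ)+k+2) * (((m:ℝ)+k+1) * Real.Gamma ((m:ℝ)+k+1)) := by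
    rw [show (m:ℝ)+1+(k+1)+1 = ((m:ℝ)+k+2)+1 by ring, Real.Gamma_add_one hB.ne',
      show (m:ℝ)+k+2 = ((m:ℝ)+k+1)+1 by ring, Real.Gamma_add_one hA.ne']
  have hG3 : Real.Gamma ((m:ℝ) + (k+2) + 1) = ((m:ℝ)+k+2) * (((m:ℝ)+k+1) * Real.Gamma ((m:ℝ)+k+1)) := by
    rw [show (m:ℝ)+(k+2)+1 = ((m:ℝ)+k+2)+1 by ring, Real.Gamma_add_one hB.ne',
      show (m:ℝ)+k+2 = ((m:ℝ)+k+1)+1 by ring, Real.Gamma_add_one hA.ne']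
  have hfac : ((m+1).factorial : ℝ) = ((m:ℝ)+1) * (m.factorial : ℝ) := by
    rw [Nat.factorial_succ]; push_cast; ring
  have hfacpos : (0:ℝ) < m.factorial := by positivity
  simp only [bc]
  push_cast
  rw [hG1, hG2, hG3, hfac, pow_succ]
  field_simp
  ring

lemma bG_rec {k : ℝ} (hk : -1 < k) (x : ℝ) :
    bG k x = (k + 1) * bG (k + 1) x - x * bG (k + 2) x := by
  have hk1 : -1 < k + 1 := by linarith
  have hk2 : -1 < k + 2 := by linarith
  have s0 := summable_bG hk x
  have s1 := summable_bG hk1 x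
  have s2 := summable_bG hk2 x
  have key : bG k x - (k + 1) * bG (k + 1) x = -x * bG (k + 2) x := by
    rw [bG, bG, ← tsum_mul_left, ← Summable.tsum_sub s0 (s1.mul_left _)]
    have hsum : Summable (fun m : ℕ => bc k m * x ^ m - (k+1) * (bc (k+1) m * x ^ m)) :=
      s0.sub (s1.mul_left _)
    rw [hsum.tsum_eq_zero_add]
    have hz : bc k 0 * x ^ 0 - (k+1) * (bc (k+1) 0 * x ^ 0) = 0 := by
      have hΓ : Real.Gamma ((0:ℕ) + (k+1) + 1) = (k+1) * Real.Gamma ((0:ℕ) + k + 1) := by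
        push_cast
        rw [show (0:ℝ)+(k+1)+1 = (k+1)+1 by ring, Real.Gamma_add_one (by linarith : k+1 ≠ 0),
          show (0:ℝ)+k+1 = k+1 by ring]
      have hΓpos := gamma_pos hk 0
      simp only [bc, pow_zero, hΓ]
      push_cast at hΓpos ⊢
      simp only [Nat.factorial_zero, Nat.cast_one, one_mul, mul_one]
      have h1 : Real.Gamma (k+1) ≠ 0 := (Real.Gamma_pos_of_pos (by linarith : (0:ℝ) < k+1)).ne'
      have h2 : k+1 ≠ 0 := by linarith
      field_simp
      ring
    rw [hz, zero_add]
    have hterm : ∀ m : ℕ, bc k (m+1) * x ^ (m+1) - (k+1) * (bc (k+1) (m+1) * x ^ (m+1))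
        = -(x * (bc (k+2) m * x ^ m)) := by
      intro m
      have := bc_rec hk m
      have hx : x ^ (m+1) = x * x ^ m := by ring
      linear_combination x ^ (m+1) * this + (bc (k+2) m * x ^ m - bc (k+2) m * x ^ m) * 0 +
        (-(bc (k+2) m)) * hx
    calc (∑' m : ℕ, (bc k (m+1) * x ^ (m+1) - (k+1) * (bc (k+1) (m+1) * x ^ (m+1))))
        = ∑' m : ℕ, -(x * (bc (k+2) m * x ^ m)) := tsum_congr hterm
      _ = -x * bG (k+2) x := by
          rw [tsum_neg, tsum_mul_left, bG]
          ring
  linarith [key]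

noncomputable def bV (k x : ℝ) : ℝ :=
  (bG k x) ^ 2 - (k + 1) * (bG k x * bG (k + 1) x) + x * (bG (k + 1) x) ^ 2

lemma hasDerivAt_bG' {k : ℝ} (hk : -1 < k) (y : ℝ) :
    HasDerivAt (bG (k + 1)) (-bG (k + 2) y) y := by
  have := hasDerivAt_bG (by linarith : -1 < k + 1) y
  rwa [show k + 1 + 1 = k + 2 by ring] at this

lemma hasDerivAt_bV {k : ℝ} (hk : -1 < k) (y : ℝ) :
    HasDerivAt (bV k)
      (-2 * bG k y * bG (k+1) y + (k+1) * ((bG (k+1) y)^2 + bG k y * bG (k+2) y)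
        + (bG (k+1) y)^2 - 2 * y * bG (k+1) y * bG (k+2) y) y := by
  have hP := hasDerivAt_bG hk y
  have hQ := hasDerivAt_bG' hk y
  have h1 : HasDerivAt (fun t => (bG k t) ^ 2) (2 * bG k y ^ 1 * (-bG (k+1) y)) y := hP.pow 2
  have h2 : HasDerivAt (fun t => (k+1) * (bG k t * bG (k+1) t))
      ((k+1) * ((-bG (k+1) y) * bG (k+1) y + bG k y * (-bG (k+2) y))) y :=
    (hP.mul hQ).const_mul (k+1)
  have h3 : HasDerivAt (fun t : ℝ => t * (bG (k+1) t) ^ 2)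
      (1 * (bG (k+1) y) ^ 2 + y * (2 * bG (k+1) y ^ 1 * (-bG (k+2) y))) y :=
    (hasDerivAt_id y).mul (hQ.pow 2)
  have := (h1.sub h2).add h3
  refine this.congr_deriv (Eq.symm ?_)
  ring

lemma hasDerivAt_bU {k : ℝ} (hk : -1 < k) {y : ℝ} (hy : 0 < y) :
    HasDerivAt (fun t => t ^ (k + 1) * bV k t) (y ^ (k + 1) * (bG (k+1) y) ^ 2) y := by
  have hrpow : HasDerivAt (fun t : ℝ => t ^ (k+1)) ((k+1) * y ^ k) y := by
    have := Real.hasDerivAt_rpow_const (x := y) (p := k+1) (Or.inl hy.ne')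
    rwa [show k + 1 - 1 = k by ring] at this
  have hdV := hasDerivAt_bV hk y
  have := hrpow.mul hdV
  refine this.congr_deriv (Eq.symm ?_)
  rw [Real.rpow_add_one hy.ne' k]
  simp only [bV]
  have hrec := bG_rec hk y
  linear_combination (y ^ (k:ℝ) * (2 * y * bG (k+1) y - (k+1) * bG k y)) * hrec

lemma bV_pos {k : ℝ} (hk : -1 < k) {x : ℝ} (hx : 0 < x) : 0 < bV k x := by
  have hk1 : (0:ℝ) < k + 1 := by linarith
  set U : ℝ → ℝ := fun t => t ^ (k + 1) * bV k t with hUdef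
  have hVdiff : Differentiable ℝ (bV k) := fun y => (hasDerivAt_bV hk y).differentiableAt
  have hVcont : Continuous (bV k) := hVdiff.continuous
  have hrpowcont : Continuous (fun t : ℝ => t ^ (k + 1)) := by
    apply continuous_iff_continuousAt.mpr
    intro t
    exact Real.continuousAt_rpow_const t (k + 1) (Or.inr hk1.le)
  have hUcont : Continuous U := hrpowcont.mul hVcont
  have hQdiff : Differentiable ℝ (bG (k+1)) := fun y => (hasDerivAt_bG' hk y).differentiableAt
  have hQcont : Continuous (bG (k + 1)) := hQdiff.continuous
  have hQ0 : 0 < bG (k + 1) 0 := by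
    rw [bG_zero]
    have : 0 < Real.Gamma (k + 1 + 1) := Real.Gamma_pos_of_pos (by linarith)
    positivity
  have hnhds : bG (k + 1) ⁻¹' Set.Ioi 0 ∈ nhds (0:ℝ) :=
    hQcont.continuousAt.preimage_mem_nhds (Ioi_mem_nhds hQ0)
  obtain ⟨δ, hδ, hball⟩ := Metric.mem_nhds_iff.mp hnhds
  set ε : ℝ := min (δ / 2) x with hεdef
  have hε : 0 < ε := lt_min (by linarith) hx
  have hεx : ε ≤ x := min_le_right _ _
  have hQpos : ∀ t ∈ Set.Icc (0:ℝ) ε, 0 < bG (k + 1) t := by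
    intro t ht
    have : t ∈ Metric.ball (0:ℝ) δ := by
      rw [Metric.mem_ball, Real.dist_eq, sub_zero, abs_of_nonneg ht.1]
      have := ht.2
      have : t ≤ δ / 2 := le_trans this (min_le_left _ _)
      linarith
    exact hball this
  have hmono1 : StrictMonoOn U (Set.Icc 0 ε) := by
    apply strictMonoOn_of_deriv_pos (convex_Icc 0 ε) hUcont.continuousOn
    intro t ht
    rw [interior_Icc] at ht
    rw [(hasDerivAt_bU hk ht.1).deriv]
    have hq := hQpos t ⟨ht.1.le, ht.2.le⟩
    have h1 : 0 < t ^ (k + 1) := Real.rpow_pos_of_pos ht.1 _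
    positivity
  have hmono2 : MonotoneOn U (Set.Icc 0 x) := by
    apply monotoneOn_of_deriv_nonneg (convex_Icc 0 x) hUcont.continuousOn
    · intro t ht
      rw [interior_Icc] at ht
      exact (hasDerivAt_bU hk ht.1).differentiableAt.differentiableWithinAt
    · intro t ht
      rw [interior_Icc] at ht
      rw [(hasDerivAt_bU hk ht.1).deriv]
      have h1 : 0 < t ^ (k + 1) := Real.rpow_pos_of_pos ht.1 _
      positivity
  have hU0 : U 0 = 0 := by
    simp [hUdef, Real.zero_rpow hk1.ne']
  have h1 : 0 < U ε := by
    have := hmono1 (Set.left_mem_Icc.mpr hε.le) (Set.right_mem_Icc.mpr hε.le) hε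
    rwa [hU0] at this
  have h2 : U ε ≤ U x := hmono2 ⟨hε.le, hεx⟩ ⟨hx.le, le_refl x⟩ hεx
  have hx1 : 0 < x ^ (k + 1) := Real.rpow_pos_of_pos hx _
  have hUx : 0 < x ^ (k + 1) * bV k x := lt_of_lt_of_le h1 h2
  nlinarith [hUx, hx1]

lemma besselJ_eq {k r : ℝ} (hr : 0 < r) :
    besselJ k r = (r / 2) ^ (k : ℝ) * bG k ((r / 2) ^ 2) := by
  have h2 : 0 < r / 2 := by linarith
  rw [besselJ, bG, ← tsum_mul_left]
  apply tsum_congr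
  intro m
  have key : (r / 2) ^ ((2 * m : ℝ) + k) = ((r/2) ^ 2) ^ m * (r/2) ^ (k:ℝ) := by
    rw [Real.rpow_add h2]
    congr 1
    rw [show (2 * (m:ℝ)) = ((2 * m : ℕ) : ℝ) by push_cast; ring, Real.rpow_natCast, pow_mul]
  rw [key, bc]
  ring

lemma F_eq {k r : ℝ} (hr : 0 < r) (hQ : bG (k + 1) ((r / 2) ^ 2) ≠ 0) :
    r * besselJ k r / besselJ (k + 1) r
      = 2 * bG k ((r / 2) ^ 2) / bG (k + 1) ((r / 2) ^ 2) := by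
  have h2 : 0 < r / 2 := by linarith
  have hc : 0 < (r / 2) ^ (k : ℝ) := Real.rpow_pos_of_pos h2 _
  rw [besselJ_eq hr, besselJ_eq hr, Real.rpow_add h2 k 1, Real.rpow_one]
  rw [div_eq_div_iff (by positivity) hQ]
  ring


/-- `F_k` is strictly decreasing on any interval on which `J_{k+1}` does not vanish. -/
theorem besselJ_ratio_strictAnti (k : ℝ) (hk : -1 < k) (a b : ℝ) (ha : 0 < a) (hab : a < b)
    (h : ∀ r ∈ Set.Icc a b, besselJ (k + 1) r ≠ 0) :
    b * besselJ k b / besselJ (k + 1) b < a * besselJ k a / besselJ (k + 1) a := by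
  have hb : 0 < b := lt_trans ha hab
  set xa : ℝ := (a / 2) ^ 2 with hxadef
  set xb : ℝ := (b / 2) ^ 2 with hxbdef
  have hxa : 0 < xa := by positivity
  have hxaxb : xa < xb := by
    have : a / 2 < b / 2 := by linarith
    nlinarith
  have hQne : ∀ x ∈ Set.Icc xa xb, bG (k + 1) x ≠ 0 := by
    intro x hx
    have hx0 : 0 < x := lt_of_lt_of_le hxa hx.1
    set r : ℝ := 2 * Real.sqrt x with hrdef
    have hsq : (r / 2) ^ 2 = x := by
      rw [hrdef]
      rw [mul_div_cancel_left₀ _ (two_ne_zero)]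
      exact Real.sq_sqrt hx0.le
    have hra : a ≤ r := by
      have h1 : Real.sqrt xa ≤ Real.sqrt x := Real.sqrt_le_sqrt hx.1
      rw [hxadef, Real.sqrt_sq (by linarith : (0:ℝ) ≤ a / 2)] at h1
      rw [hrdef]; linarith
    have hrb : r ≤ b := by
      have h1 : Real.sqrt x ≤ Real.sqrt xb := Real.sqrt_le_sqrt hx.2
      rw [hxbdef, Real.sqrt_sq (by linarith : (0:ℝ) ≤ b / 2)] at h1
      rw [hrdef]; linarith
    have hr0 : 0 < r := lt_of_lt_of_le ha hra
    have hne := h r ⟨hra, hrb⟩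
    rw [besselJ_eq hr0, hsq] at hne
    intro hcon
    exact hne (by rw [hcon, mul_zero])
  have anti : StrictAntiOn (fun x => bG k x / bG (k + 1) x) (Set.Icc xa xb) := by
    apply strictAntiOn_of_deriv_neg (convex_Icc xa xb)
    · intro x hx
      exact (((hasDerivAt_bG hk x).differentiableAt).div
        ((hasDerivAt_bG' hk x).differentiableAt) (hQne x hx)).continuousAt.continuousWithinAt
    · intro x hx
      rw [interior_Icc] at hx
      have hx0 : 0 < x := lt_trans hxa hx.1
      have hQ := hQne x ⟨hx.1.le, hx.2.le⟩
      have hd : HasDerivAt (fun x => bG k x / bG (k + 1) x)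
          (((-bG (k+1) x) * bG (k+1) x - bG k x * (-bG (k+2) x)) / (bG (k+1) x) ^ 2) x :=
        (hasDerivAt_bG hk x).div (hasDerivAt_bG' hk x) hQ
      rw [hd.deriv]
      apply div_neg_of_neg_of_pos
      · have hbv := bV_pos hk hx0
        have hrec := bG_rec hk x
        have key : x * ((-bG (k+1) x) * bG (k+1) x - bG k x * (-bG (k+2) x)) = -bV k x := by
          simp only [bV]
          linear_combination bG k x * hrec
        nlinarith [hbv, hx0, key]
      · exact lt_of_le_of_ne (sq_nonneg _) (Ne.symm (pow_ne_zero 2 hQ))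
  have hmem_a : xa ∈ Set.Icc xa xb := Set.left_mem_Icc.mpr hxaxb.le
  have hmem_b : xb ∈ Set.Icc xa xb := Set.right_mem_Icc.mpr hxaxb.le
  have hlt := anti hmem_a hmem_b hxaxb
  have hQa := hQne xa hmem_a
  have hQb := hQne xb hmem_b
  rw [F_eq ha hQa, F_eq hb hQb, mul_div_assoc, mul_div_assoc]
  simp only at hlt
  linarith
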